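/- Let K : ℝ → ℝ be defined by K(x) = 2cos(x)/(π² − 4x²) for x ≠ ±π/2, with K(±π/2) = 1/(2π). Call z : [−π/2, π/2] → ℝ an upper pointed zig-zag function if there is c ∈ [−π/2, π/2] with z(x) = (x − c) + z(c) for x ∈ [−π/2, c] and z(x) = −(x − c) + z(c) for x ∈ [c, π/2]. Let I, s ∈ ℝ satisfy ∫_{−π/2}^{π/2} (s − (x + π/2)) K(x) dx ≤ I ≤ ∫_{−π/2}^{π/2} (s + (x + π/2)) K(x) dx. Let A be the set of functions f : [−π/2, π/2] → ℝ with |f(x) − f(y)| ≤ |x − y| for all x, y, f(−π/2) = s, and ∫_{−π/2}^{π/2} f(x) K(x) dx ≤ I; let B be the set of upper pointed zig-zag functions z with z(−π/2) ≤ s and ∫_{−π/2}^{π/2} z(x) K(x) dx = I. Then for every even integer N ≥ 2 (so that K(x + Nπ) < 0 on (−π/2, π/2)): inf_{f ∈ A} ∫_{−π/2}^{π/2} f(x) K(x + Nπ) dx ≥ inf_{z ∈ B} ∫_{−π/2}^{π/2} z(x) K(x + Nπ) dx. -/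

import Mathlib

open MeasureTheory Filter

/-- The extremal kernel `K(x) = 2cos(x)/(π² − 4x²)`, extended continuously by
the value `1/(2π)` at its removable singularities `x = ±π/2`. -/
noncomputable def Kker (x : ℝ) : ℝ :=
  if x = Real.pi / 2 ∨ x = -(Real.pi / 2) then 1 / (2 * Real.pi)
  else 2 * Real.cos x / (Real.pi ^ 2 - 4 * x ^ 2)

/-- `z` is an upper pointed zig-zag function on `[−π/2, π/2]`. -/
def UpperPointedZigZag (z : ℝ → ℝ) : Prop :=
  ∃ c ∈ Set.Icc (-(Real.pi / 2)) (Real.pi / 2),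
    (∀ x ∈ Set.Icc (-(Real.pi / 2)) c, z x = (x - c) + z c) ∧
    (∀ x ∈ Set.Icc c (Real.pi / 2), z x = -(x - c) + z c)

namespace ZigZagAux

open Real Set intervalIntegral

noncomputable def aa : ℝ := -(Real.pi/2)
noncomputable def bb : ℝ := Real.pi/2

lemma aa_lt_bb : aa < bb := by
  have := Real.pi_pos; unfold aa bb; linarith

lemma aa_le_bb : aa ≤ bb := aa_lt_bb.le

lemma Kker_of_ne {x : ℝ} (h1 : x ≠ Real.pi/2) (h2 : x ≠ -(Real.pi/2)) :
    Kker x = 2 * Real.cos x / (Real.pi ^ 2 - 4 * x ^ 2) := by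
  unfold Kker; rw [if_neg]; push_neg; exact ⟨h1, h2⟩

lemma mem_Ioo_of_ne {x : ℝ} (hx : x ∈ Icc aa bb) (h1 : x ≠ Real.pi/2)
    (h2 : x ≠ -(Real.pi/2)) : x ∈ Ioo aa bb := by
  obtain ⟨hl, hr⟩ := hx
  exact ⟨lt_of_le_of_ne hl (by simpa [aa, eq_comm] using h2),
    lt_of_le_of_ne hr (by simpa [bb] using h1)⟩

lemma denom_pos {x : ℝ} (hx : x ∈ Ioo aa bb) : 0 < Real.pi ^ 2 - 4 * x ^ 2 := by
  obtain ⟨h1, h2⟩ := hx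
  unfold aa at h1; unfold bb at h2
  nlinarith [Real.pi_pos]

lemma Kker_pos {x : ℝ} (hx : x ∈ Ioo aa bb) : 0 < Kker x := by
  have hd := denom_pos hx
  obtain ⟨h1, h2⟩ := hx
  unfold aa at h1; unfold bb at h2
  rw [Kker_of_ne (ne_of_lt h2) (ne_of_gt h1)]
  have hc : 0 < Real.cos x := Real.cos_pos_of_mem_Ioo ⟨h1, h2⟩
  positivity

lemma Kker_nonneg {x : ℝ} (hx : x ∈ Icc aa bb) : 0 ≤ Kker x := by
  by_cases h1 : x = Real.pi/2
  · unfold Kker; rw [if_pos (Or.inl h1)]; positivity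
  by_cases h2 : x = -(Real.pi/2)
  · unfold Kker; rw [if_pos (Or.inr h2)]; positivity
  · exact (Kker_pos (mem_Ioo_of_ne hx h1 h2)).le

lemma Kker_le {x : ℝ} (hx : x ∈ Icc aa bb) : Kker x ≤ 1 / Real.pi := by
  have hπ := Real.pi_pos
  by_cases h1 : x = Real.pi/2
  · unfold Kker; rw [if_pos (Or.inl h1)]
    rw [div_le_div_iff₀ (by positivity) hπ]; nlinarith
  by_cases h2 : x = -(Real.pi/2)
  · unfold Kker; rw [if_pos (Or.inr h2)]
    rw [div_le_div_iff₀ (by positivity) hπ]; nlinarith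
  have hio := mem_Ioo_of_ne hx h1 h2
  have hd := denom_pos hio
  obtain ⟨hl, hr⟩ := hio
  unfold aa at hl; unfold bb at hr
  rw [Kker_of_ne (ne_of_lt hr) (ne_of_gt hl)]
  rw [div_le_div_iff₀ hd hπ]
  rcases le_or_gt 0 x with hx0 | hx0
  · have hs : Real.sin (Real.pi/2 - x) ≤ Real.pi/2 - x := Real.sin_le (by linarith)
    rw [Real.sin_pi_div_two_sub] at hs
    nlinarith
  · have hs : Real.sin (x + Real.pi/2) ≤ x + Real.pi/2 := Real.sin_le (by linarith)
    rw [Real.sin_add_pi_div_two] at hs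
    nlinarith

lemma Kker_measurable : Measurable Kker := by
  unfold Kker
  apply Measurable.ite
  · have : {x : ℝ | x = Real.pi/2 ∨ x = -(Real.pi/2)} = {Real.pi/2, -(Real.pi/2)} := by
      ext y; simp [Set.mem_insert_iff]
    rw [this]
    exact (Set.toFinite _).measurableSet
  · exact measurable_const
  · exact (measurable_const.mul Real.measurable_cos).div
      (measurable_const.sub (measurable_const.mul (measurable_id.pow_const 2)))

end ZigZagAux
namespace ZigZagAux
open Real Set intervalIntegral MeasureTheory

/-- integrability of `g * Kker` for `g` continuous on the interval -/
lemma integ_mulK {g : ℝ → ℝ} (hg : ContinuousOn g (Icc aa bb)) :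
    IntervalIntegrable (fun x => g x * Kker x) volume aa bb := by
  obtain ⟨C, hC⟩ := isCompact_Icc.exists_bound_of_continuousOn hg
  rw [intervalIntegrable_iff, uIoc_of_le aa_le_bb]
  apply IntegrableOn.mono_set (t := Icc aa bb) _ Ioc_subset_Icc_self
  constructor
  · exact (hg.aestronglyMeasurable measurableSet_Icc).mul
      (Kker_measurable.aestronglyMeasurable.restrict)
  · apply MeasureTheory.HasFiniteIntegral.of_bounded
      (C := C * (1/Real.pi))
    rw [ae_restrict_iff' measurableSet_Icc]
    apply ae_of_all
    intro x hx
    rw [Real.norm_eq_abs, abs_mul, abs_of_nonneg (Kker_nonneg hx)]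
    have h1 : |g x| ≤ C := by have := hC x hx; rwa [Real.norm_eq_abs] at this
    have h2 : Kker x ≤ 1/Real.pi := Kker_le hx
    have h3 : (0:ℝ) ≤ Kker x := Kker_nonneg hx
    have h4 : (0:ℝ) ≤ |g x| := abs_nonneg _
    nlinarith

noncomputable def mK : ℝ := ∫ x in aa..bb, Kker x

lemma integ_K : IntervalIntegrable Kker volume aa bb := by
  have := integ_mulK (g := fun _ => 1) continuousOn_const
  simpa using this

lemma mK_pos : 0 < mK :=
  intervalIntegral_pos_of_pos_on integ_K (fun x hx => Kker_pos hx) aa_lt_bb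

noncomputable def aInt (c : ℝ) : ℝ := ∫ x in aa..bb, |x - c| * Kker x

lemma integ_absK (c : ℝ) : IntervalIntegrable (fun x => |x - c| * Kker x) volume aa bb :=
  integ_mulK ((continuous_id.sub continuous_const).abs.continuousOn)

lemma aInt_sub_le (c d : ℝ) : |aInt c - aInt d| ≤ |c - d| * mK := by
  have h1 : aInt c - aInt d = ∫ x in aa..bb, (|x - c| - |x - d|) * Kker x := by
    unfold aInt
    rw [← intervalIntegral.integral_sub (integ_absK c) (integ_absK d)]
    congr 1; funext x; ring
  rw [h1]
  have hint : IntervalIntegrable (fun x => (|x - c| - |x - d|) * Kker x) volume aa bb := by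
    have := (integ_absK c).sub (integ_absK d)
    simpa [sub_mul] using this
  calc |∫ x in aa..bb, (|x - c| - |x - d|) * Kker x|
      ≤ ∫ x in aa..bb, |(|x - c| - |x - d|) * Kker x| :=
        intervalIntegral.abs_integral_le_integral_abs aa_le_bb
    _ ≤ ∫ x in aa..bb, |c - d| * Kker x := by
        apply intervalIntegral.integral_mono_on aa_le_bb hint.abs
          (integ_mulK continuousOn_const)
        intro x hx
        rw [abs_mul, abs_of_nonneg (Kker_nonneg hx)]
        have h2 : abs (|x - c| - |x - d|) ≤ |c - d| := by
          have := abs_abs_sub_abs_le_abs_sub (x - c) (x - d)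
          simpa [sub_sub_sub_cancel_left, abs_sub_comm d c] using this
        exact mul_le_mul_of_nonneg_right h2 (Kker_nonneg hx)
    _ = |c - d| * mK := intervalIntegral.integral_const_mul _ _

end ZigZagAux
namespace ZigZagAux
open Real Set intervalIntegral MeasureTheory

lemma aInt_cont : Continuous aInt := by
  have hm := mK_pos
  have : LipschitzWith (Real.toNNReal mK) aInt := by
    apply LipschitzWith.of_dist_le_mul
    intro c d
    rw [Real.dist_eq, Real.dist_eq]
    calc |aInt c - aInt d| ≤ |c - d| * mK := aInt_sub_le c d
      _ = mK * |c - d| := by ring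
      _ = (Real.toNNReal mK : ℝ) * |c - d| := by
          rw [Real.coe_toNNReal _ mK_pos.le]
  exact this.continuous

/-- integral of a tent function against `Kker` -/
lemma tent_integral (c h : ℝ) :
    ∫ x in aa..bb, (h - |x - c|) * Kker x = h * mK - aInt c := by
  have e : (fun x => (h - |x - c|) * Kker x)
      = fun x => h * Kker x - |x - c| * Kker x := by funext x; ring
  rw [e, intervalIntegral.integral_sub (integ_mulK continuousOn_const) (integ_absK c),
    intervalIntegral.integral_const_mul]
  rfl

section Kshift
variable {N : ℕ}

lemma shift_big (hN : 2 ≤ N) {x : ℝ} (hx : x ∈ Icc aa bb) :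
    3 * Real.pi / 2 ≤ x + N * Real.pi := by
  have hπ := Real.pi_pos
  have h2 : (2:ℝ) ≤ (N:ℝ) := by exact_mod_cast hN
  have := hx.1
  unfold aa at this
  nlinarith

lemma K2_eq (hN : 2 ≤ N) (hNeven : N % 2 = 0) {x : ℝ} (hx : x ∈ Icc aa bb) :
    Kker (x + N * Real.pi)
      = 2 * Real.cos x / (Real.pi ^ 2 - 4 * (x + N * Real.pi) ^ 2) := by
  have hπ := Real.pi_pos
  have hbig := shift_big hN hx
  have h1 : x + N * Real.pi ≠ Real.pi / 2 := by intro h; rw [h] at hbig; linarith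
  have h2 : x + N * Real.pi ≠ -(Real.pi / 2) := by intro h; rw [h] at hbig; linarith
  rw [Kker_of_ne h1 h2]
  obtain ⟨k, hk⟩ := Nat.even_iff.mpr hNeven
  have : (N : ℝ) * Real.pi = (k : ℝ) * (2 * Real.pi) := by
    have : (N : ℝ) = 2 * k := by push_cast [hk]; ring
    rw [this]; ring
  rw [this]
  norm_cast
  rw [Real.cos_add_nat_mul_two_pi]

lemma K2_denom_neg (hN : 2 ≤ N) {x : ℝ} (hx : x ∈ Icc aa bb) :
    Real.pi ^ 2 - 4 * (x + N * Real.pi) ^ 2 < 0 := by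
  have hπ := Real.pi_pos
  have hbig := shift_big hN hx
  nlinarith

lemma K2_nonpos (hN : 2 ≤ N) (hNeven : N % 2 = 0) {x : ℝ} (hx : x ∈ Icc aa bb) :
    Kker (x + N * Real.pi) ≤ 0 := by
  rw [K2_eq hN hNeven hx]
  have h1 : 0 ≤ 2 * Real.cos x := by
    have : 0 ≤ Real.cos x := Real.cos_nonneg_of_mem_Icc (by exact hx)
    linarith
  exact div_nonpos_of_nonneg_of_nonpos h1 (K2_denom_neg hN hx).le

lemma K2_contOn (hN : 2 ≤ N) (hNeven : N % 2 = 0) :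
    ContinuousOn (fun x => Kker (x + N * Real.pi)) (Icc aa bb) := by
  have hcont : ContinuousOn
      (fun x : ℝ => 2 * Real.cos x / (Real.pi ^ 2 - 4 * (x + N * Real.pi) ^ 2))
      (Icc aa bb) := by
    apply ContinuousOn.div
    · exact (continuous_const.mul Real.continuous_cos).continuousOn
    · fun_prop
    · intro x hx; exact (K2_denom_neg hN hx).ne
  exact hcont.congr (fun x hx => K2_eq hN hNeven hx)

lemma integ_mulK2 (hN : 2 ≤ N) (hNeven : N % 2 = 0) {g : ℝ → ℝ}
    (hg : ContinuousOn g (Icc aa bb)) :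
    IntervalIntegrable (fun x => g x * Kker (x + N * Real.pi)) volume aa bb := by
  apply ContinuousOn.intervalIntegrable
  rw [uIcc_of_le aa_le_bb]
  exact hg.mul (K2_contOn hN hNeven)

end Kshift

end ZigZagAux
namespace ZigZagAux
open Real Set intervalIntegral MeasureTheory

section Lambda

/-- `β = 4N²-2` -/
noncomputable def bet (n : ℝ) : ℝ := 4*n^2 - 2
/-- the largest admissible λ -/
noncomputable def lmax (n : ℝ) : ℝ := (bet n - Real.sqrt ((bet n)^2 - 4))/2
/-- discriminant -/
noncomputable def DD (n l : ℝ) : ℝ := 4*Real.pi^2*(l^2 - (4*n^2-2)*l + 1)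
noncomputable def pp1 (n l : ℝ) : ℝ :=
  (-(4*l*n*Real.pi) - Real.sqrt (DD n l))/(4*(1+l))
noncomputable def pp2 (n l : ℝ) : ℝ :=
  (-(4*l*n*Real.pi) + Real.sqrt (DD n l))/(4*(1+l))

variable {n l : ℝ}

lemma bet_ge (hn : 2 ≤ n) : 14 ≤ bet n := by unfold bet; nlinarith
lemma bet_sq (hn : 2 ≤ n) : Real.sqrt ((bet n)^2 - 4)^2 = (bet n)^2 - 4 :=
  Real.sq_sqrt (by have := bet_ge hn; nlinarith)

lemma sqrt_bet_lt (hn : 2 ≤ n) : Real.sqrt ((bet n)^2 - 4) < bet n := by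
  have hb := bet_ge hn
  have h1 : Real.sqrt ((bet n)^2 - 4) < Real.sqrt ((bet n)^2) := by
    apply Real.sqrt_lt_sqrt (by nlinarith) (by nlinarith)
  rwa [Real.sqrt_sq (by linarith)] at h1

lemma lmax_pos (hn : 2 ≤ n) : 0 < lmax n := by
  unfold lmax; have := sqrt_bet_lt hn; linarith

lemma two_lmax_le (hn : 2 ≤ n) : 2 * lmax n ≤ bet n := by
  unfold lmax; have := Real.sqrt_nonneg ((bet n)^2 - 4); linarith

lemma DD_at_lmax (hn : 2 ≤ n) : DD n (lmax n) = 0 := by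
  have hs := bet_sq hn
  unfold DD lmax bet
  unfold bet at hs
  nlinarith [hs]

lemma DD_nonneg (hn : 2 ≤ n) (h0 : 0 ≤ l) (hL : l ≤ lmax n) : 0 ≤ DD n l := by
  have h2 := two_lmax_le hn
  have hq : (lmax n)^2 - (4*n^2-2)*(lmax n) + 1 = 0 := by
    have h := DD_at_lmax hn
    unfold DD at h
    rcases mul_eq_zero.mp h with h' | h'
    · exfalso; have hπ := Real.pi_pos; nlinarith
    · exact h' 
  unfold DD
  have hπ := Real.pi_pos
  have key : 0 ≤ l^2 - (4*n^2-2)*l + 1 := by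
    have e : l^2 - (4*n^2-2)*l + 1 = (lmax n - l) * ((4*n^2-2) - l - lmax n) + ((lmax n)^2 - (4*n^2-2)*(lmax n) + 1) := by ring
    rw [e, hq, add_zero]
    apply mul_nonneg (by linarith)
    unfold bet at h2; linarith
  nlinarith

lemma lmax_mul_le (hn : 2 ≤ n) : (2*n - 1) * lmax n ≤ 1 := by
  have hs := bet_sq hn
  have hb := bet_ge hn
  have hsn := Real.sqrt_nonneg ((bet n)^2 - 4)
  -- (2n-1)*sqrt ≥ (2n-1)β - 2
  have key : (2*n-1) * (bet n) - 2 ≤ (2*n-1) * Real.sqrt ((bet n)^2 - 4) := by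
    set B := (2*n-1) * (bet n) - 2 with hB
    set A := (2*n-1) * Real.sqrt ((bet n)^2 - 4) with hA
    have hA0 : 0 ≤ A := mul_nonneg (by linarith) hsn
    have hBA : B^2 ≤ A^2 := by
      have e : A^2 = (2*n-1)^2 * ((bet n)^2 - 4) := by rw [hA, mul_pow, hs]
      rw [e, hB]
      unfold bet
      nlinarith [sq_nonneg n, sq_nonneg (n-1)]
    calc B ≤ |B| := le_abs_self B
      _ = Real.sqrt (B^2) := (Real.sqrt_sq_eq_abs B).symm
      _ ≤ Real.sqrt (A^2) := Real.sqrt_le_sqrt hBA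
      _ = A := Real.sqrt_sq hA0
  unfold lmax
  nlinarith

lemma lam_facts (hn : 2 ≤ n) (h0 : 0 ≤ l) (hL : l ≤ lmax n) :
    0 ≤ 1 + l - 2*l*n := by
  have h1 : (2*n-1) * l ≤ (2*n-1) * lmax n :=
    mul_le_mul_of_nonneg_left hL (by linarith)
  have := lmax_mul_le hn
  nlinarith

end Lambda

end ZigZagAux
namespace ZigZagAux
open Real Set intervalIntegral MeasureTheory

variable {n l : ℝ}

lemma denomA_pos (h0 : 0 ≤ l) : (0:ℝ) < 4*(1+l) := by linarith

lemma pp1_ge (hn : 2 ≤ n) (h0 : 0 ≤ l) (hL : l ≤ lmax n) : aa ≤ pp1 n l := by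
  have hπ := Real.pi_pos
  have hA := denomA_pos h0
  have hlam := lam_facts hn h0 hL
  have hs : Real.sqrt (DD n l) ≤ 2*Real.pi*(1+l-2*l*n) := by
    have h1 : DD n l ≤ (2*Real.pi*(1+l-2*l*n))^2 := by
      unfold DD; nlinarith [mul_nonneg (mul_nonneg h0 (by linarith : (0:ℝ) ≤ n)) (mul_nonneg (by linarith : (0:ℝ) ≤ n - 1) (by linarith : (0:ℝ) ≤ 1 + l))]
    calc Real.sqrt (DD n l) ≤ Real.sqrt ((2*Real.pi*(1+l-2*l*n))^2) := Real.sqrt_le_sqrt h1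
      _ = 2*Real.pi*(1+l-2*l*n) := Real.sqrt_sq (by nlinarith)
  unfold pp1 aa
  rw [le_div_iff₀ hA]
  nlinarith

lemma pp2_le (hn : 2 ≤ n) (h0 : 0 ≤ l) (hL : l ≤ lmax n) : pp2 n l ≤ bb := by
  have hπ := Real.pi_pos
  have hA := denomA_pos h0
  have hn0 : (0:ℝ) ≤ n := by linarith
  have hs : Real.sqrt (DD n l) ≤ 2*Real.pi*(1+l) := by
    have h1 : DD n l ≤ (2*Real.pi*(1+l))^2 := by unfold DD; nlinarith [mul_nonneg (mul_nonneg (sq_nonneg Real.pi) h0) (sq_nonneg n)]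
    calc Real.sqrt (DD n l) ≤ Real.sqrt ((2*Real.pi*(1+l))^2) := Real.sqrt_le_sqrt h1
      _ = 2*Real.pi*(1+l) := Real.sqrt_sq (by nlinarith)
  unfold pp2 bb
  rw [div_le_iff₀ hA]
  nlinarith [mul_nonneg (mul_nonneg h0 hn0) hπ.le]

lemma pp1_le_pp2 (hn : 2 ≤ n) (h0 : 0 ≤ l) (hL : l ≤ lmax n) : pp1 n l ≤ pp2 n l := by
  have hA := denomA_pos h0
  unfold pp1 pp2
  rw [div_le_div_iff_of_pos_right hA]
  linarith [Real.sqrt_nonneg (DD n l)]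

lemma pp1_at_zero : pp1 n 0 = aa := by
  unfold pp1 DD aa
  have : Real.sqrt (4*Real.pi^2*(0^2 - (4*n^2-2)*0 + 1)) = 2*Real.pi := by
    rw [show 4*Real.pi^2*((0:ℝ)^2 - (4*n^2-2)*0 + 1) = (2*Real.pi)^2 by ring]
    exact Real.sqrt_sq (by positivity)
  rw [this]; ring

lemma pp2_at_zero : pp2 n 0 = bb := by
  unfold pp2 DD bb
  have : Real.sqrt (4*Real.pi^2*(0^2 - (4*n^2-2)*0 + 1)) = 2*Real.pi := by
    rw [show 4*Real.pi^2*((0:ℝ)^2 - (4*n^2-2)*0 + 1) = (2*Real.pi)^2 by ring]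
    exact Real.sqrt_sq (by positivity)
  rw [this]; ring

lemma pp_at_lmax (hn : 2 ≤ n) : pp1 n (lmax n) = pp2 n (lmax n) := by
  unfold pp1 pp2
  rw [DD_at_lmax hn, Real.sqrt_zero]; ring

lemma quad_id (hn : 2 ≤ n) (h0 : 0 ≤ l) (hL : l ≤ lmax n) (x : ℝ) :
    (Real.pi^2 - 4*x^2) - l*(4*(x+n*Real.pi)^2 - Real.pi^2)
      = -(4*(1+l)) * ((x - pp1 n l) * (x - pp2 n l)) := by
  have hA : (4*(1+l)) ≠ 0 := (denomA_pos h0).ne'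
  have hsd : Real.sqrt (DD n l)^2 = DD n l := Real.sq_sqrt (DD_nonneg hn h0 hL)
  have e : (x - pp1 n l) * (x - pp2 n l)
      = ((4*(1+l)*x + 4*l*n*Real.pi)^2 - DD n l)/(4*(1+l))^2 := by
    unfold pp1 pp2
    field_simp
    ring_nf
    linear_combination (-1) * hsd
  rw [e]
  field_simp
  unfold DD
  ring

lemma pp1_contOn (hn : 2 ≤ n) : ContinuousOn (fun t => pp1 n t) (Icc 0 (lmax n)) := by
  unfold pp1 DD
  apply ContinuousOn.div
  · fun_prop
  · fun_prop
  · intro t ht; have := ht.1; positivity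

lemma pp2_contOn (hn : 2 ≤ n) : ContinuousOn (fun t => pp2 n t) (Icc 0 (lmax n)) := by
  unfold pp2 DD
  apply ContinuousOn.div
  · fun_prop
  · fun_prop
  · intro t ht; have := ht.1; positivity

end ZigZagAux
namespace ZigZagAux
open Real Set intervalIntegral MeasureTheory

section Tent

variable {f : ℝ → ℝ} {p1 p2 : ℝ}

/-- tent through `(p1, f p1)` and `(p2, f p2)` : peak position -/
noncomputable def tc (f : ℝ → ℝ) (p1 p2 : ℝ) : ℝ := (p1+p2)/2 + (f p2 - f p1)/2
/-- tent apex height -/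
noncomputable def th (f : ℝ → ℝ) (p1 p2 : ℝ) : ℝ := (p2-p1)/2 + (f p1 + f p2)/2

variable (hLip : ∀ x ∈ Icc aa bb, ∀ y ∈ Icc aa bb, |f x - f y| ≤ |x - y|)
  (hp1 : aa ≤ p1) (h12 : p1 ≤ p2) (hp2 : p2 ≤ bb)

include hLip hp1 h12 hp2

lemma fdiff_le : |f p2 - f p1| ≤ p2 - p1 := by
  have := hLip p2 ⟨le_trans hp1 h12, hp2⟩ p1 ⟨hp1, le_trans h12 hp2⟩
  rwa [abs_of_nonneg (by linarith : (0:ℝ) ≤ p2 - p1)] at this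

lemma tc_ge : p1 ≤ tc f p1 p2 := by
  have := abs_le.mp (fdiff_le hLip hp1 h12 hp2)
  unfold tc; linarith [this.2]

lemma tc_le : tc f p1 p2 ≤ p2 := by
  have := abs_le.mp (fdiff_le hLip hp1 h12 hp2)
  unfold tc; linarith [this.1]

lemma claimA {x : ℝ} (hx1 : p1 ≤ x) (hx2 : x ≤ p2) :
    f x ≤ th f p1 p2 - |x - tc f p1 p2| := by
  have hxI : x ∈ Icc aa bb := ⟨le_trans hp1 hx1, le_trans hx2 hp2⟩
  rcases le_or_gt x (tc f p1 p2) with hxc | hxc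
  · rw [abs_of_nonpos (by linarith : x - tc f p1 p2 ≤ 0)]
    have hl := hLip x hxI p1 ⟨hp1, le_trans h12 hp2⟩
    rw [abs_of_nonneg (by linarith : (0:ℝ) ≤ x - p1)] at hl
    have := abs_le.mp hl
    unfold th tc at *; linarith [this.2]
  · rw [abs_of_nonneg (by linarith : (0:ℝ) ≤ x - tc f p1 p2)]
    have hl := hLip x hxI p2 ⟨le_trans hp1 h12, hp2⟩
    rw [abs_of_nonpos (by linarith : x - p2 ≤ 0)] at hl
    have := abs_le.mp hl
    unfold th tc at *; linarith [this.2]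

lemma claimB {x : ℝ} (hx1 : aa ≤ x) (hx2 : x ≤ p1) :
    th f p1 p2 - |x - tc f p1 p2| ≤ f x := by
  have hxI : x ∈ Icc aa bb := ⟨hx1, le_trans hx2 (le_trans h12 hp2)⟩
  have hc := tc_ge hLip hp1 h12 hp2
  rw [abs_of_nonpos (by linarith : x - tc f p1 p2 ≤ 0)]
  have hl := hLip p1 ⟨hp1, le_trans h12 hp2⟩ x hxI
  rw [abs_of_nonneg (by linarith : (0:ℝ) ≤ p1 - x)] at hl
  have := abs_le.mp hl
  unfold th tc at *; linarith [this.2]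

lemma claimC {x : ℝ} (hx1 : p2 ≤ x) (hx2 : x ≤ bb) :
    th f p1 p2 - |x - tc f p1 p2| ≤ f x := by
  have hxI : x ∈ Icc aa bb := ⟨le_trans hp1 (le_trans h12 hx1), hx2⟩
  have hc := tc_le hLip hp1 h12 hp2
  rw [abs_of_nonneg (by linarith : (0:ℝ) ≤ x - tc f p1 p2)]
  have hl := hLip p2 ⟨le_trans hp1 h12, hp2⟩ x hxI
  rw [abs_of_nonpos (by linarith : p2 - x ≤ 0)] at hl
  have := abs_le.mp hl
  unfold th tc at *; linarith [this.2]

end Tent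

section Weight

variable {N : ℕ} {l : ℝ}

lemma W_interior (hN : 2 ≤ N) (hNeven : N % 2 = 0) (l : ℝ) {x : ℝ} (hx : x ∈ Ioo aa bb) :
    -(Kker (x + N * Real.pi)) - l * Kker x
      = 2*Real.cos x * ((Real.pi^2 - 4*x^2) - l*(4*(x+N*Real.pi)^2 - Real.pi^2))
        / ((4*(x+N*Real.pi)^2 - Real.pi^2) * (Real.pi^2 - 4*x^2)) := by
  have hd1 := denom_pos hx
  have hxI : x ∈ Icc aa bb := Ioo_subset_Icc_self hx
  have hd2 : 0 < 4*(x+N*Real.pi)^2 - Real.pi^2 := by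
    have := K2_denom_neg hN hxI; linarith
  obtain ⟨h1, h2⟩ := hx
  unfold aa at h1; unfold bb at h2
  rw [K2_eq hN hNeven hxI, Kker_of_ne (ne_of_lt h2) (ne_of_gt h1)]
  have hne1 : Real.pi^2 - 4*(x+N*Real.pi)^2 ≠ 0 := by linarith
  have hne2 : Real.pi^2 - 4*x^2 ≠ 0 := by linarith
  have hne3 : 4*(x+N*Real.pi)^2 - Real.pi^2 ≠ 0 := by linarith
  rw [show Real.pi^2 - 4*(x+N*Real.pi)^2 = -(4*(x+N*Real.pi)^2 - Real.pi^2) by ring]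
  field_simp

lemma W_nonneg_mid (hN : 2 ≤ N) (hNeven : N % 2 = 0)
    (h0 : 0 ≤ l) (hL : l ≤ lmax (N:ℝ)) {x : ℝ} (hx : x ∈ Ioo aa bb)
    (hx1 : pp1 (N:ℝ) l ≤ x) (hx2 : x ≤ pp2 (N:ℝ) l) :
    0 ≤ -(Kker (x + N * Real.pi)) - l * Kker x := by
  have hn : 2 ≤ (N:ℝ) := by exact_mod_cast hN
  rw [W_interior hN hNeven l hx]
  have hd1 := denom_pos hx
  have hd2 : 0 < 4*(x+N*Real.pi)^2 - Real.pi^2 := by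
    have := K2_denom_neg hN (Ioo_subset_Icc_self hx); linarith
  apply div_nonneg _ (by positivity)
  apply mul_nonneg
  · have := Real.cos_nonneg_of_mem_Icc (Ioo_subset_Icc_self hx); linarith
  · rw [quad_id hn h0 hL x]
    have h4 : (0:ℝ) < 4*(1+l) := by linarith
    nlinarith [mul_nonpos_of_nonneg_of_nonpos (by linarith : (0:ℝ) ≤ x - pp1 (N:ℝ) l) (by linarith : x - pp2 (N:ℝ) l ≤ 0)]

lemma W_nonpos_out (hN : 2 ≤ N) (hNeven : N % 2 = 0)
    (h0 : 0 ≤ l) (hL : l ≤ lmax (N:ℝ)) {x : ℝ} (hx : x ∈ Ioo aa bb)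
    (hout : x ≤ pp1 (N:ℝ) l ∨ pp2 (N:ℝ) l ≤ x) :
    -(Kker (x + N * Real.pi)) - l * Kker x ≤ 0 := by
  have hn : 2 ≤ (N:ℝ) := by exact_mod_cast hN
  have h12 := pp1_le_pp2 hn h0 hL
  rw [W_interior hN hNeven l hx]
  have hd1 := denom_pos hx
  have hd2 : 0 < 4*(x+N*Real.pi)^2 - Real.pi^2 := by
    have := K2_denom_neg hN (Ioo_subset_Icc_self hx); linarith
  apply div_nonpos_of_nonpos_of_nonneg _ (by positivity)
  apply mul_nonpos_of_nonneg_of_nonpos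
  · have := Real.cos_nonneg_of_mem_Icc (Ioo_subset_Icc_self hx); linarith
  · rw [quad_id hn h0 hL x]
    rcases hout with hout | hout
    · nlinarith [mul_nonneg (by linarith : (0:ℝ) ≤ pp1 (N:ℝ) l - x) (by linarith : (0:ℝ) ≤ pp2 (N:ℝ) l - x)]
    · nlinarith [mul_nonneg (by linarith : (0:ℝ) ≤ x - pp1 (N:ℝ) l) (by linarith : (0:ℝ) ≤ x - pp2 (N:ℝ) l)]

lemma Kker_at_aa : Kker aa = 1/(2*Real.pi) := by
  unfold Kker aa; rw [if_pos (Or.inr rfl)]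

lemma Kker_at_bb : Kker bb = 1/(2*Real.pi) := by
  unfold Kker bb; rw [if_pos (Or.inl rfl)]

lemma K2_at_end (hN : 2 ≤ N) (hNeven : N % 2 = 0) {x : ℝ}
    (hx : x ∈ Icc aa bb) (hcos : Real.cos x = 0) : Kker (x + N * Real.pi) = 0 := by
  rw [K2_eq hN hNeven hx, hcos]
  simp

lemma W_end_aa (hN : 2 ≤ N) (hNeven : N % 2 = 0) (h0 : 0 ≤ l) :
    -(Kker (aa + N * Real.pi)) - l * Kker aa ≤ 0 := by
  rw [Kker_at_aa, K2_at_end hN hNeven (left_mem_Icc.mpr aa_le_bb)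
    (by unfold aa; rw [Real.cos_neg, Real.cos_pi_div_two])]
  have := Real.pi_pos
  have : 0 ≤ l * (1/(2*Real.pi)) := by positivity
  linarith

lemma W_end_bb (hN : 2 ≤ N) (hNeven : N % 2 = 0) (h0 : 0 ≤ l) :
    -(Kker (bb + N * Real.pi)) - l * Kker bb ≤ 0 := by
  rw [Kker_at_bb, K2_at_end hN hNeven (right_mem_Icc.mpr aa_le_bb)
    (by unfold bb; rw [Real.cos_pi_div_two])]
  have := Real.pi_pos
  have : 0 ≤ l * (1/(2*Real.pi)) := by positivity
  linarith

end Weight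

end ZigZagAux
namespace ZigZagAux
open Real Set intervalIntegral MeasureTheory

lemma lip_contOn {f : ℝ → ℝ}
    (hLip : ∀ x ∈ Icc aa bb, ∀ y ∈ Icc aa bb, |f x - f y| ≤ |x - y|) :
    ContinuousOn f (Icc aa bb) := by
  have : LipschitzOnWith 1 f (Icc aa bb) := by
    rw [lipschitzOnWith_iff_dist_le_mul]
    intro x hx y hy
    rw [Real.dist_eq, Real.dist_eq]
    simpa using hLip x hx y hy
  exact this.continuousOn

lemma tent_zigzag {c : ℝ} (hc : c ∈ Icc aa bb) (h : ℝ) :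
    UpperPointedZigZag (fun x => h - |x - c|) := by
  refine ⟨c, by simpa [aa, bb] using hc, fun x hx => ?_, fun x hx => ?_⟩
  · have hxc : x ≤ c := hx.2
    simp only
    rw [abs_of_nonpos (by linarith : x - c ≤ 0), sub_self, abs_zero]; ring
  · have hxc : c ≤ x := hx.1
    simp only
    rw [abs_of_nonneg (by linarith : (0:ℝ) ≤ x - c), sub_self, abs_zero]; ring

lemma upp_rewrite (s : ℝ) :
    (∫ x in aa..bb, (s + (x + Real.pi/2)) * Kker x)
      = (s + Real.pi) * mK - aInt bb := by
  have e : EqOn (fun x => (s + (x + Real.pi/2)) * Kker x)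
      (fun x => (s + Real.pi) * Kker x - |x - bb| * Kker x) (uIcc aa bb) := by
    intro x hx
    rw [uIcc_of_le aa_le_bb] at hx
    have h2 : x ≤ bb := hx.2
    simp only
    rw [abs_of_nonpos (by linarith : x - bb ≤ 0)]
    unfold bb; ring
  rw [intervalIntegral.integral_congr e,
    intervalIntegral.integral_sub (integ_mulK continuousOn_const) (integ_absK bb),
    intervalIntegral.integral_const_mul]
  rfl

/-- The key construction: for every admissible `f` there is a zig-zag
competitor `z` beating it. -/
lemma key (N : ℕ) (hN : 2 ≤ N) (hNeven : N % 2 = 0) (I s : ℝ)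
    (hupp : I ≤ ∫ x in aa..bb, (s + (x + Real.pi/2)) * Kker x)
    (f : ℝ → ℝ)
    (hLip : ∀ x ∈ Icc aa bb, ∀ y ∈ Icc aa bb, |f x - f y| ≤ |x - y|)
    (hfa : f aa = s)
    (hfI : (∫ x in aa..bb, f x * Kker x) ≤ I) :
    ∃ z : ℝ → ℝ, UpperPointedZigZag z ∧ z aa ≤ s ∧
      (∫ x in aa..bb, z x * Kker x) = I ∧
      (∫ x in aa..bb, z x * Kker (x + N * Real.pi))
        ≤ ∫ x in aa..bb, f x * Kker (x + N * Real.pi) := by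
  have hπ := Real.pi_pos
  have hfc := lip_contOn hLip
  have hupp' : I ≤ (s + Real.pi) * mK - aInt bb := by
    rwa [upp_rewrite s] at hupp
  have hfbb : |f bb - s| ≤ Real.pi := by
    have := hLip bb (right_mem_Icc.mpr aa_le_bb) aa (left_mem_Icc.mpr aa_le_bb)
    rw [hfa] at this
    calc |f bb - s| ≤ |bb - aa| := this
      _ = Real.pi := by rw [abs_of_nonneg (by linarith [aa_lt_bb])]; unfold aa bb; ring
  set cb : ℝ := (f bb - s)/2 with hcb
  have hcbmem : cb ∈ Icc aa bb := by
    have := abs_le.mp hfbb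
    constructor
    · unfold aa; rw [hcb]; linarith [this.1]
    · unfold bb; rw [hcb]; linarith [this.2]
  set G : ℝ → ℝ := fun c => (s + c + Real.pi/2) * mK - aInt c with hG
  have hGcont : Continuous G := by
    apply Continuous.sub
    · fun_prop
    · exact aInt_cont
  have hGbb : I ≤ G bb := by
    have : G bb = (s + Real.pi) * mK - aInt bb := by
      rw [hG]; simp only; unfold bb; ring_nf
    rw [this]; exact hupp'
  by_cases hcase : G cb ≤ I
  -- Case 1 : the anchored family works
  · obtain ⟨c, hcmem, hGc⟩ := intermediate_value_Icc hcbmem.2 hGcont.continuousOn ⟨hcase, hGbb⟩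
    have hcI : c ∈ Icc aa bb := ⟨le_trans hcbmem.1 hcmem.1, hcmem.2⟩
    set z : ℝ → ℝ := fun x => (s + c + Real.pi/2) - |x - c| with hz
    have hdom : ∀ x ∈ Icc aa bb, f x ≤ z x := by
      intro x hx
      rcases le_or_gt x c with hxc | hxc
      · have h1 := hLip x hx aa (left_mem_Icc.mpr aa_le_bb)
        rw [hfa] at h1
        have h2 : |x - aa| = x + Real.pi/2 := by
          rw [abs_of_nonneg (by linarith [hx.1, show aa = -(Real.pi/2) from rfl])]
          unfold aa; ring
        rw [h2] at h1
        have := (abs_le.mp h1).2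
        rw [hz]; simp only
        rw [abs_of_nonpos (by linarith : x - c ≤ 0)]
        linarith
      · have h1 := hLip x hx bb (right_mem_Icc.mpr aa_le_bb)
        have h2 : |x - bb| = Real.pi/2 - x := by
          rw [abs_of_nonpos (by linarith [hx.2, show bb = Real.pi/2 from rfl])]
          unfold bb; ring
        rw [h2] at h1
        have h3 := (abs_le.mp h1).2
        have h4 : cb ≤ c := hcmem.1
        rw [hz]; simp only
        rw [abs_of_nonneg (by linarith : (0:ℝ) ≤ x - c)]
        rw [hcb] at h4
        linarith
    refine ⟨z, tent_zigzag hcI _, ?_, ?_, ?_⟩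
    · rw [hz]; simp only
      have : |aa - c| = c + Real.pi/2 := by
        rw [abs_of_nonpos (by linarith [hcI.1] : aa - c ≤ 0)]
        unfold aa; ring
      rw [this]; linarith
    · rw [hz]
      rw [tent_integral c (s + c + Real.pi/2)]
      rw [← hGc]
    · apply intervalIntegral.integral_mono_on aa_le_bb
      · exact integ_mulK2 hN hNeven
          ((continuous_const.sub (continuous_id.sub continuous_const).abs).continuousOn)
      · exact integ_mulK2 hN hNeven hfc
      · intro x hx
        exact mul_le_mul_of_nonpos_right (hdom x hx) (K2_nonpos hN hNeven hx)
  -- Case 2 : the λ-family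
  · push_neg at hcase
    have hn2 : (2:ℝ) ≤ (N:ℝ) := by exact_mod_cast hN
    set n : ℝ := (N:ℝ) with hn
    set L : ℝ := lmax n with hLdef
    have hL0 : 0 < L := lmax_pos hn2
    have hmaps : ∀ t ∈ Icc (0:ℝ) 1, t*L ∈ Icc 0 L := by
      intro t ht
      exact ⟨mul_nonneg ht.1 hL0.le, by nlinarith [ht.2, hL0.le, ht.1]⟩
    have hP1mem : ∀ t ∈ Icc (0:ℝ) 1, pp1 n (t*L) ∈ Icc aa bb := by
      intro t ht
      obtain ⟨h0, hLe⟩ := hmaps t ht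
      exact ⟨pp1_ge hn2 h0 hLe, le_trans (pp1_le_pp2 hn2 h0 hLe) (pp2_le hn2 h0 hLe)⟩
    have hP2mem : ∀ t ∈ Icc (0:ℝ) 1, pp2 n (t*L) ∈ Icc aa bb := by
      intro t ht
      obtain ⟨h0, hLe⟩ := hmaps t ht
      exact ⟨le_trans (pp1_ge hn2 h0 hLe) (pp1_le_pp2 hn2 h0 hLe), pp2_le hn2 h0 hLe⟩
    have hP1c : ContinuousOn (fun t => pp1 n (t*L)) (Icc 0 1) :=
      (pp1_contOn hn2).comp (by fun_prop) (fun t ht => hmaps t ht)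
    have hP2c : ContinuousOn (fun t => pp2 n (t*L)) (Icc 0 1) :=
      (pp2_contOn hn2).comp (by fun_prop) (fun t ht => hmaps t ht)
    have hF1c : ContinuousOn (fun t => f (pp1 n (t*L))) (Icc 0 1) :=
      hfc.comp hP1c hP1mem
    have hF2c : ContinuousOn (fun t => f (pp2 n (t*L))) (Icc 0 1) :=
      hfc.comp hP2c hP2mem
    set g : ℝ → ℝ := fun t => th f (pp1 n (t*L)) (pp2 n (t*L)) * mK
        - aInt (tc f (pp1 n (t*L)) (pp2 n (t*L))) with hgdef
    have hthc : ContinuousOn (fun t => th f (pp1 n (t*L)) (pp2 n (t*L))) (Icc 0 1) := by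
      unfold th
      exact ((hP2c.sub hP1c).div_const 2).add ((hF1c.add hF2c).div_const 2)
    have htcc : ContinuousOn (fun t => tc f (pp1 n (t*L)) (pp2 n (t*L))) (Icc 0 1) := by
      unfold tc
      exact ((hP1c.add hP2c).div_const 2).add ((hF2c.sub hF1c).div_const 2)
    have hgc : ContinuousOn g (Icc 0 1) := by
      rw [hgdef]
      exact (hthc.mul continuousOn_const).sub (aInt_cont.comp_continuousOn htcc)
    have hg0 : g 0 = G cb := by
      have hp10 : pp1 n ((0:ℝ)*L) = aa := by rw [zero_mul]; exact pp1_at_zero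
      have hp20 : pp2 n ((0:ℝ)*L) = bb := by rw [zero_mul]; exact pp2_at_zero
      rw [hgdef]
      simp only [hp10, hp20]
      have h1 : th f aa bb = s + cb + Real.pi/2 := by
        unfold th; rw [hfa, hcb]; unfold aa bb; ring
      have h2 : tc f aa bb = cb := by
        unfold tc; rw [hfa, hcb]; unfold aa bb; ring
      rw [h1, h2, hG]
    have hg1 : g 1 ≤ I := by
      have hone : (1:ℝ)*L = L := one_mul L
      have hpeq : pp2 n ((1:ℝ)*L) = pp1 n ((1:ℝ)*L) := by
        rw [hone]; exact (pp_at_lmax hn2).symm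
      set p := pp1 n ((1:ℝ)*L) with hp
      have hpmem : p ∈ Icc aa bb := hP1mem 1 (by norm_num)
      have e1 : th f p p = f p := by unfold th; ring
      have e2 : tc f p p = p := by unfold tc; ring
      have e3 : g 1 = f p * mK - aInt p := by
        rw [hgdef]; simp only [hpeq, ← hp, e1, e2]
      have e4 : g 1 = ∫ x in aa..bb, (f p - |x - p|) * Kker x := by
        rw [e3, tent_integral]
      have e5 : (∫ x in aa..bb, (f p - |x - p|) * Kker x)
          ≤ ∫ x in aa..bb, f x * Kker x := by
        apply intervalIntegral.integral_mono_on aa_le_bb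
        · exact integ_mulK ((continuous_const.sub (continuous_id.sub continuous_const).abs).continuousOn)
        · exact integ_mulK hfc
        · intro x hx
          apply mul_le_mul_of_nonneg_right _ (Kker_nonneg hx)
          have h1 := (abs_le.mp (hLip p hpmem x hx)).2
          rw [abs_sub_comm p x] at h1
          linarith
      rw [e4]; exact le_trans e5 hfI
    obtain ⟨t, htmem, hgt⟩ := intermediate_value_Icc' (by norm_num : (0:ℝ) ≤ 1) hgc
      ⟨hg1, by rw [hg0]; exact hcase.le⟩
    obtain ⟨h0l, hlL⟩ := hmaps t htmem
    set l := t*L with hldef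
    set p1 := pp1 n l with hp1def
    set p2 := pp2 n l with hp2def
    have hp1 : aa ≤ p1 := pp1_ge hn2 h0l hlL
    have h12 : p1 ≤ p2 := pp1_le_pp2 hn2 h0l hlL
    have hp2 : p2 ≤ bb := pp2_le hn2 h0l hlL
    set c := tc f p1 p2 with hcdef
    set h := th f p1 p2 with hhdef
    set z : ℝ → ℝ := fun x => h - |x - c| with hzdef
    have hcmem : c ∈ Icc aa bb :=
      ⟨le_trans hp1 (tc_ge hLip hp1 h12 hp2), le_trans (tc_le hLip hp1 h12 hp2) hp2⟩
    have hzI : (∫ x in aa..bb, z x * Kker x) = I := by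
      rw [hzdef, tent_integral c h]
      rw [hhdef, hcdef]
      exact hgt
    have hzaa : z aa ≤ s := by
      rw [hzdef]; simp only
      rw [← hfa]
      exact claimB hLip hp1 h12 hp2 le_rfl hp1
    -- master pointwise inequality
    have hmaster : ∀ x ∈ Icc aa bb,
        f x * (-(Kker (x + N*Real.pi)) - l * Kker x)
          ≤ z x * (-(Kker (x + N*Real.pi)) - l * Kker x) := by
      intro x hx
      by_cases hxa : x = aa
      · subst hxa
        exact mul_le_mul_of_nonpos_right (by simpa [← hfa] using hzaa)
          (W_end_aa hN hNeven h0l)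
      by_cases hxb : x = bb
      · subst hxb
        have hzb : z bb ≤ f bb := claimC hLip hp1 h12 hp2 hp2 le_rfl
        exact mul_le_mul_of_nonpos_right hzb (W_end_bb hN hNeven h0l)
      have hio : x ∈ Ioo aa bb := mem_Ioo_of_ne hx (by unfold bb at hxb; exact hxb)
        (by unfold aa at hxa; exact hxa)
      rcases le_or_gt x p1 with hxp | hxp
      · exact mul_le_mul_of_nonpos_right (claimB hLip hp1 h12 hp2 hx.1 hxp)
          (W_nonpos_out hN hNeven h0l hlL hio (Or.inl hxp))
      rcases le_or_gt p2 x with hxq | hxq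
      · exact mul_le_mul_of_nonpos_right (claimC hLip hp1 h12 hp2 hxq hx.2)
          (W_nonpos_out hN hNeven h0l hlL hio (Or.inr hxq))
      · exact mul_le_mul_of_nonneg_right (claimA hLip hp1 h12 hp2 hxp.le hxq.le)
          (W_nonneg_mid hN hNeven h0l hlL hio hxp.le hxq.le)
    -- integrate the master inequality
    have hzc : ContinuousOn z (Icc aa bb) := by
      rw [hzdef]
      exact (continuous_const.sub (continuous_id.sub continuous_const).abs).continuousOn
    have hintf2 := integ_mulK2 hN hNeven hfc
    have hintz2 := integ_mulK2 hN hNeven hzc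
    have hintf1 := integ_mulK hfc
    have hintz1 := integ_mulK hzc
    have eshape : ∀ u : ℝ → ℝ, (fun x => u x * (-(Kker (x + N*Real.pi)) - l * Kker x))
        = fun x => (-1) * (u x * Kker (x + N*Real.pi)) - l * (u x * Kker x) := by
      intro u; funext x; ring
    have hu : IntervalIntegrable
        (fun x => f x * (-(Kker (x + N*Real.pi)) - l * Kker x)) volume aa bb := by
      rw [eshape f]; exact (hintf2.const_mul (-1)).sub (hintf1.const_mul l)
    have hv : IntervalIntegrable
        (fun x => z x * (-(Kker (x + N*Real.pi)) - l * Kker x)) volume aa bb := by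
      rw [eshape z]; exact (hintz2.const_mul (-1)).sub (hintz1.const_mul l)
    have hmono := intervalIntegral.integral_mono_on aa_le_bb hu hv hmaster
    have eu : (∫ x in aa..bb, f x * (-(Kker (x + N*Real.pi)) - l * Kker x))
        = (-1) * (∫ x in aa..bb, f x * Kker (x + N*Real.pi))
          - l * (∫ x in aa..bb, f x * Kker x) := by
      rw [eshape f, intervalIntegral.integral_sub (hintf2.const_mul (-1)) (hintf1.const_mul l),
        intervalIntegral.integral_const_mul, intervalIntegral.integral_const_mul]
    have ev : (∫ x in aa..bb, z x * (-(Kker (x + N*Real.pi)) - l * Kker x))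
        = (-1) * (∫ x in aa..bb, z x * Kker (x + N*Real.pi))
          - l * (∫ x in aa..bb, z x * Kker x) := by
      rw [eshape z, intervalIntegral.integral_sub (hintz2.const_mul (-1)) (hintz1.const_mul l),
        intervalIntegral.integral_const_mul, intervalIntegral.integral_const_mul]
    rw [eu, ev, hzI] at hmono
    refine ⟨z, tent_zigzag hcmem h, hzaa, hzI, ?_⟩
    nlinarith [mul_nonneg h0l (sub_nonneg.mpr hfI)]

end ZigZagAux
namespace ZigZagAux
open Real Set intervalIntegral MeasureTheory

lemma bdd_below_B (N : ℕ) (hN : 2 ≤ N) (hNeven : N % 2 = 0) (I s : ℝ) :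
    BddBelow ((fun z : ℝ → ℝ =>
        ∫ x in aa..bb, z x * Kker (x + (N : ℝ) * Real.pi)) ''
      {z : ℝ → ℝ | UpperPointedZigZag z ∧ z aa ≤ s ∧
        (∫ x in aa..bb, z x * Kker x) = I}) := by
  have hπ := Real.pi_pos
  refine ⟨(I/mK + Real.pi) * ∫ x in aa..bb, Kker (x + (N:ℝ) * Real.pi), ?_⟩
  rintro w ⟨z, ⟨hzz, hza, hzI⟩, rfl⟩
  obtain ⟨c, hc, hbr1, hbr2⟩ := hzz
  have hcI : c ∈ Icc aa bb := hc
  have hzeq : ∀ x ∈ Icc aa bb, z x = z c - |x - c| := by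
    intro x hx
    rcases le_total x c with hxc | hxc
    · have := hbr1 x ⟨hx.1, hxc⟩
      rw [abs_of_nonpos (by linarith : x - c ≤ 0)]
      linarith [this]
    · have := hbr2 x ⟨hxc, hx.2⟩
      rw [abs_of_nonneg (by linarith : (0:ℝ) ≤ x - c)]
      linarith [this]
  have hIeq : z c * mK - aInt c = I := by
    rw [← hzI, ← tent_integral c (z c)]
    apply intervalIntegral.integral_congr
    intro x hx
    rw [uIcc_of_le aa_le_bb] at hx
    simp only
    rw [← hzeq x hx]
  have habs_le : ∀ x ∈ Icc aa bb, |x - c| ≤ Real.pi := by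
    intro x hx
    have h1 := hx.1; have h2 := hx.2
    have h3 := hcI.1; have h4 := hcI.2
    unfold aa at h1 h3; unfold bb at h2 h4
    rw [abs_le]; constructor <;> linarith
  have haInt_le : aInt c ≤ Real.pi * mK := by
    unfold aInt
    calc (∫ x in aa..bb, |x - c| * Kker x)
        ≤ ∫ x in aa..bb, Real.pi * Kker x := by
          apply intervalIntegral.integral_mono_on aa_le_bb (integ_absK c)
            (integ_mulK continuousOn_const)
          intro x hx
          exact mul_le_mul_of_nonneg_right (habs_le x hx) (Kker_nonneg hx)
      _ = Real.pi * mK := intervalIntegral.integral_const_mul _ _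
  have hzc : z c ≤ I/mK + Real.pi := by
    have hm := mK_pos
    rw [← sub_nonneg]
    have e : I/mK + Real.pi - z c = (I + Real.pi * mK - z c * mK)/mK := by
      field_simp
    rw [e]
    apply div_nonneg _ hm.le
    linarith [hIeq, haInt_le]
  have hzcont : ContinuousOn z (Icc aa bb) :=
    ContinuousOn.congr
      ((continuous_const.sub (continuous_id.sub continuous_const).abs).continuousOn)
      (fun x hx => hzeq x hx)
  calc (I/mK + Real.pi) * ∫ x in aa..bb, Kker (x + (N:ℝ) * Real.pi)
      = ∫ x in aa..bb, (I/mK + Real.pi) * Kker (x + (N:ℝ) * Real.pi) :=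
        (intervalIntegral.integral_const_mul _ _).symm
    _ ≤ ∫ x in aa..bb, z x * Kker (x + (N:ℝ) * Real.pi) := by
        apply intervalIntegral.integral_mono_on aa_le_bb
          (integ_mulK2 hN hNeven continuousOn_const) (integ_mulK2 hN hNeven hzcont)
        intro x hx
        apply mul_le_mul_of_nonpos_right _ (K2_nonpos hN hNeven hx)
        rw [hzeq x hx]
        have := abs_nonneg (x - c)
        linarith

end ZigZagAux


/-- **Lemma 3.6 of the paper**: reduction of 1-Lipschitz competitors to
upper pointed zig-zag functions.  For even `N ≥ 2` (so `K(x+Nπ) < 0` on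
`(−π/2,π/2)`), the infimum of `∫ f(x) K(x+Nπ) dx` over the class `A` is at
least the corresponding infimum over the zig-zag class `B`. -/
theorem lipschitz_to_zigzag_reduction
    (I s : ℝ) (N : ℕ) (hN : 2 ≤ N) (hNeven : N % 2 = 0)
    (hlow : (∫ x in (-(Real.pi / 2))..(Real.pi / 2),
        (s - (x + Real.pi / 2)) * Kker x) ≤ I)
    (hupp : I ≤ ∫ x in (-(Real.pi / 2))..(Real.pi / 2),
        (s + (x + Real.pi / 2)) * Kker x) :
    sInf ((fun z : ℝ → ℝ =>
        ∫ x in (-(Real.pi / 2))..(Real.pi / 2), z x * Kker (x + (N : ℝ) * Real.pi)) ''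
      {z : ℝ → ℝ | UpperPointedZigZag z ∧ z (-(Real.pi / 2)) ≤ s ∧
        (∫ x in (-(Real.pi / 2))..(Real.pi / 2), z x * Kker x) = I})
    ≤
    sInf ((fun f : ℝ → ℝ =>
        ∫ x in (-(Real.pi / 2))..(Real.pi / 2), f x * Kker (x + (N : ℝ) * Real.pi)) ''
      {f : ℝ → ℝ |
        (∀ x ∈ Set.Icc (-(Real.pi / 2)) (Real.pi / 2),
          ∀ y ∈ Set.Icc (-(Real.pi / 2)) (Real.pi / 2), |f x - f y| ≤ |x - y|) ∧
        f (-(Real.pi / 2)) = s ∧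
        (∫ x in (-(Real.pi / 2))..(Real.pi / 2), f x * Kker x) ≤ I}) := by
  apply le_csInf
  · refine ⟨_, ⟨fun x => s - (x + Real.pi/2), ⟨?_, ?_, ?_⟩, rfl⟩⟩
    · intro x hx y hy
      have e : s - (x + Real.pi/2) - (s - (y + Real.pi/2)) = y - x := by ring
      rw [e, abs_sub_comm]
    · ring
    · exact hlow
  · rintro b ⟨f, ⟨hLip, hfa, hfI⟩, rfl⟩
    obtain ⟨z, hz1, hz2, hz3, hz4⟩ :=
      ZigZagAux.key N hN hNeven I s hupp f hLip hfa hfI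
    exact le_trans
      (csInf_le (ZigZagAux.bdd_below_B N hN hNeven I s) ⟨z, ⟨hz1, hz2, hz3⟩, rfl⟩) hz4
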